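/- Let $0<p_1\le u_1<\infty$ and $0<p_2\le u_2<\infty$. Then $m_{u_1,p_1}(\mathbb{Z}^d)= m_{u_2,p_2}(\mathbb{Z}^d)$ as sets with equivalent quasi-norms (equivalently, both inclusions $m_{u_1,p_1}\hookrightarrow m_{u_2,p_2}$ and $m_{u_2,p_2}\hookrightarrow m_{u_1,p_1}$ are continuous) if, and only if, $u_1=u_2$ and $p_1=p_2$. -/

import Mathlib

open scoped ENNReal NNReal BigOperators
open Filter

/-- The unit cube `Q_{0,k}` is contained in the dyadic cube `Q_{-j,m}` of side length `2^j`. -/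
def inDyadic (d j : ℕ) (m k : Fin d → ℤ) : Prop :=
  ∀ i, 2 ^ j * m i ≤ k i ∧ k i < 2 ^ j * (m i + 1)

/-- The Morrey sequence space quasi-norm `‖λ | m_{u,p}(ℤ^d)‖`, with values in `ℝ≥0∞`. -/
noncomputable def morreyNorm (d : ℕ) (u p : ℝ) (lam : (Fin d → ℤ) → ℂ) : ℝ≥0∞ :=
  ⨆ (j : ℕ) (m : Fin d → ℤ),
    ((2 : ℝ≥0∞) ^ (j * d)) ^ (1 / u - 1 / p) *
      (∑' k : {k : Fin d → ℤ // inDyadic d j m k}, (‖lam k.1‖₊ : ℝ≥0∞) ^ p) ^ (1 / p)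

/-- The `ℓ_r(ℤ^d)` norm. -/
noncomputable def lpNorm (d : ℕ) (r : ℝ) (lam : (Fin d → ℤ) → ℂ) : ℝ≥0∞ :=
  (∑' k : Fin d → ℤ, (‖lam k‖₊ : ℝ≥0∞) ^ r) ^ (1 / r)

/-- The `ℓ_∞(ℤ^d)` norm. -/
noncomputable def lInftyNorm (d : ℕ) (lam : (Fin d → ℤ) → ℂ) : ℝ≥0∞ :=
  ⨆ k : Fin d → ℤ, (‖lam k‖₊ : ℝ≥0∞)

/-- The weak Lorentz `ℓ_{u,∞}(ℤ^d)` norm, via the distribution function. -/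
noncomputable def weakNorm (d : ℕ) (u : ℝ) (lam : (Fin d → ℤ) → ℂ) : ℝ≥0∞ :=
  ⨆ t : ℝ≥0, (t : ℝ≥0∞) *
    (∑' _ : {k : Fin d → ℤ // (t : ℝ) < ‖lam k‖}, (1 : ℝ≥0∞)) ^ (1 / u)

/-- The norm of the level-`j` space `X^{(j)}_{u,p}(ℤ^d)`. -/
noncomputable def XjNorm (d : ℕ) (u p p' : ℝ) (j : ℕ) (lam : (Fin d → ℤ) → ℂ) : ℝ≥0∞ :=
  ((2 : ℝ≥0∞) ^ (j * d)) ^ (1 / p - 1 / u) *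
    ∑' m : Fin d → ℤ,
      (∑' k : {k : Fin d → ℤ // inDyadic d j m k}, (‖lam k.1‖₊ : ℝ≥0∞) ^ p') ^ (1 / p')

/-- The norm of `X_{u,p}(ℤ^d)`: infimum over decompositions `λ = ∑_j λ^{(j)}`. -/
noncomputable def XupNorm (d : ℕ) (u p p' : ℝ) (lam : (Fin d → ℤ) → ℂ) : ℝ≥0∞ :=
  ⨅ (L : ℕ → (Fin d → ℤ) → ℂ) (_ : ∀ k, HasSum (fun j => L j k) (lam k)),
    ∑' j : ℕ, XjNorm d u p p' j (L j)

/-- Membership in `m_{u,p}(ℤ^d)`. -/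
def MemMorrey (d : ℕ) (u p : ℝ) (lam : (Fin d → ℤ) → ℂ) : Prop :=
  morreyNorm d u p lam ≠ ⊤

/-- Membership in `m^{00}_{u,p}(ℤ^d)`, the closure of the finitely supported sequences. -/
def MemMorrey00 (d : ℕ) (u p : ℝ) (lam : (Fin d → ℤ) → ℂ) : Prop :=
  MemMorrey d u p lam ∧
    ∀ ε : ℝ≥0∞, 0 < ε → ∃ mu : (Fin d → ℤ) → ℂ,
      (Function.support mu).Finite ∧ morreyNorm d u p (lam - mu) < ε

/-- `Q_{-ν,m} ⊆ Q_{-j,0}` for dyadic cubes. -/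
def subCube (d j ν : ℕ) (m : Fin d → ℤ) : Prop :=
  ν ≤ j ∧ ∀ i, 0 ≤ m i ∧ 2 ^ ν * (m i + 1) ≤ 2 ^ j

/-- Norm of the finite-dimensional Morrey space `m^{2^{jd}}_{u,p}` on the cube `Q_{-j,0}`. -/
noncomputable def finMorreyNorm (d : ℕ) (u p : ℝ) (j : ℕ) (lam : (Fin d → ℤ) → ℂ) : ℝ≥0∞ :=
  ⨆ (ν : ℕ) (m : Fin d → ℤ) (_ : subCube d j ν m),
    ((2 : ℝ≥0∞) ^ (ν * d)) ^ (1 / u - 1 / p) *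
      (∑' k : {k : Fin d → ℤ // inDyadic d ν m k}, (‖lam k.1‖₊ : ℝ≥0∞) ^ p) ^ (1 / p)

/-- Operator norm of `id_j : m^{2^{jd}}_{u₁,p₁} → m^{2^{jd}}_{u₂,p₂}`. -/
noncomputable def morreyOpNorm (d : ℕ) (u₁ p₁ u₂ p₂ : ℝ) (j : ℕ) : ℝ≥0∞ :=
  ⨆ (lam : (Fin d → ℤ) → ℂ) (_ : finMorreyNorm d u₁ p₁ j lam ≤ 1),
    finMorreyNorm d u₂ p₂ j lam

section MorreyAux
open scoped Classical

/-- test condition -/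
def testCond (d J ν : ℕ) (k : Fin d → ℤ) : Prop :=
  ∀ i, 0 ≤ k i ∧ k i < 2 ^ J ∧ (2:ℤ) ^ ν ∣ k i

noncomputable def testSeq (d J ν : ℕ) : (Fin d → ℤ) → ℂ :=
  fun k => if testCond d J ν k then 1 else 0

lemma gval {d J ν : ℕ} {p : ℝ} (hp : 0 < p) (k : Fin d → ℤ) :
    (‖testSeq d J ν k‖₊ : ℝ≥0∞) ^ p = if testCond d J ν k then 1 else 0 := by
  unfold testSeq
  split
  · simp
  · simp [ENNReal.zero_rpow_of_pos hp]

-- generic upper bound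
lemma tsum_le_card {d M : ℕ} (Q : (Fin d → ℤ) → Prop)
    (g : (Fin d → ℤ) → ℝ≥0∞) (hg1 : ∀ k, g k ≤ 1)
    (f : (Fin d → ℤ) → (Fin d → Fin M))
    (hinj : Set.InjOn f {k | Q k ∧ g k ≠ 0}) :
    ∑' k : {k // Q k}, g k.1 ≤ ((M ^ d : ℕ) : ℝ≥0∞) := by
  rw [ENNReal.tsum_eq_iSup_sum]
  refine iSup_le fun s => ?_
  classical
  calc ∑ k ∈ s, g k.1 = ∑ k ∈ s.filter (fun k => g k.1 ≠ 0), g k.1 := by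
        rw [Finset.sum_filter_ne_zero]
    _ ≤ ∑ _k ∈ s.filter (fun k => g k.1 ≠ 0), (1:ℝ≥0∞) :=
        Finset.sum_le_sum fun k _ => hg1 k.1
    _ = ((s.filter (fun k => g k.1 ≠ 0)).card : ℝ≥0∞) := by simp
    _ ≤ ((M ^ d : ℕ) : ℝ≥0∞) := by
        refine Nat.cast_le.2 ?_
        have : (s.filter (fun k => g k.1 ≠ 0)).card ≤ Fintype.card (Fin d → Fin M) := by
          apply Finset.card_le_card_of_injOn (fun k => f k.1)
          · intro k _; exact Finset.mem_univ _
          · intro a ha b hb hab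
            simp only [Finset.mem_coe, Finset.mem_filter] at ha hb
            exact Subtype.ext (hinj ⟨a.2, ha.2⟩ ⟨b.2, hb.2⟩ hab)
        calc _ ≤ Fintype.card (Fin d → Fin M) := this
          _ = M ^ d := by simp [Fintype.card_fun]

-- generic lower bound
lemma card_le_tsum {d M : ℕ} (Q : (Fin d → ℤ) → Prop)
    (g : (Fin d → ℤ) → ℝ≥0∞)
    (e : (Fin d → Fin M) → (Fin d → ℤ)) (he : Function.Injective e)
    (heQ : ∀ a, Q (e a)) (hg : ∀ a, g (e a) = 1) :
    ((M ^ d : ℕ) : ℝ≥0∞) ≤ ∑' k : {k // Q k}, g k.1 := by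
  classical
  set e' : (Fin d → Fin M) → {k // Q k} := fun a => ⟨e a, heQ a⟩ with he'
  have hinj' : Function.Injective e' := fun a b hab => he (congrArg Subtype.val hab)
  have := Summable.sum_le_tsum (f := fun k : {k // Q k} => g k.1)
    (Finset.univ.map ⟨e', hinj'⟩) (fun i _ => zero_le) ENNReal.summable
  refine le_trans ?_ this
  rw [Finset.sum_map]
  simp only [Function.Embedding.coeFn_mk, he']
  rw [Finset.sum_congr rfl (fun a _ => hg a)]
  simp [Fintype.card_fun]

lemma coord {j ν : ℕ} (hν : ν ≤ j) {c x : ℤ} (h1 : 2^j * c ≤ x) (h2 : x < 2^j * (c+1)) (hdvd : (2:ℤ)^ν ∣ x) :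
    x = 2^j * c + 2^ν * ((((x - 2^j*c)/2^ν).toNat % 2^(j-ν) : ℕ) : ℤ) := by
  have h2ν : (0:ℤ) < 2^ν := by positivity
  have hsplit : (2:ℤ)^j = 2^ν * 2^(j-ν) := by
    rw [← pow_add, Nat.add_sub_cancel' hν]
  have hdvd2 : (2:ℤ)^ν ∣ x - 2^j*c := by
    exact dvd_sub hdvd (Dvd.dvd.mul_right (pow_dvd_pow 2 hν) c)
  obtain ⟨t, ht⟩ := hdvd2
  have hx0 : 0 ≤ x - 2^j*c := sub_nonneg.2 h1
  have hxlt : x - 2^j*c < 2^j := by linarith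
  have ht0 : 0 ≤ t := nonneg_of_mul_nonneg_right (ht ▸ hx0) h2ν
  have htlt : t < 2^(j-ν) := by
    have : 2^ν * t < 2^ν * 2^(j-ν) := by rw [← ht, ← hsplit]; exact hxlt
    exact lt_of_mul_lt_mul_left this (le_of_lt h2ν)
  have hdiv : (x - 2^j*c)/2^ν = t := by
    rw [ht, Int.mul_ediv_cancel_left t (ne_of_gt h2ν)]
  rw [hdiv]
  have htoNat : ((t.toNat : ℤ)) = t := Int.toNat_of_nonneg ht0
  have hlt' : t.toNat < 2^(j-ν) := by
    have h' : ((t.toNat : ℤ)) < ((2^(j-ν) : ℕ) : ℤ) := by push_cast; rw [htoNat]; exact htlt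
    exact_mod_cast h'
  rw [Nat.mod_eq_of_lt hlt', htoNat]
  linarith [ht]

lemma testCond_of_ne {d J ν : ℕ} {p : ℝ} (hp : 0 < p) {k : Fin d → ℤ}
    (h : (‖testSeq d J ν k‖₊ : ℝ≥0∞) ^ p ≠ 0) : testCond d J ν k := by
  by_contra hc
  rw [gval hp, if_neg hc] at h
  exact h rfl

-- C1 : lower bound at (J, 0)
lemma count_lower {d J ν : ℕ} {p : ℝ} (hp : 0 < p) (hν : ν ≤ J) :
    (((2^(J-ν))^d : ℕ) : ℝ≥0∞) ≤
      ∑' k : {k // inDyadic d J (fun _ => 0) k}, (‖testSeq d J ν k.1‖₊ : ℝ≥0∞) ^ p := by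
  have hsplit : (2:ℤ)^J = 2^ν * 2^(J-ν) := by rw [← pow_add, Nat.add_sub_cancel' hν]
  refine card_le_tsum (Q := inDyadic d J (fun _ => 0)) (g := fun k => (‖testSeq d J ν k‖₊ : ℝ≥0∞) ^ p) (fun a i => 2^ν * ((a i : ℕ) : ℤ)) ?_ ?_ ?_
  · intro a b hab
    funext i
    have := congrFun hab i
    have h2ν : (0:ℤ) < 2^ν := by positivity
    have : ((a i : ℕ) : ℤ) = ((b i : ℕ) : ℤ) := mul_left_cancel₀ (ne_of_gt h2ν) this
    exact Fin.ext (by exact_mod_cast this)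
  · intro a i
    constructor
    · simp only [mul_zero]; positivity
    · have h1 : ((a i : ℕ) : ℤ) < (2^(J-ν) : ℕ) := by exact_mod_cast (a i).2
      have : 2^ν * ((a i : ℕ) : ℤ) < 2^ν * ((2^(J-ν) : ℕ) : ℤ) := by
        apply mul_lt_mul_of_pos_left h1 (by positivity)
      simp only [mul_zero, zero_add, mul_one]
      calc 2^ν * ((a i : ℕ) : ℤ) < 2^ν * ((2^(J-ν) : ℕ) : ℤ) := this
        _ = 2^J := by push_cast; rw [hsplit]
  · intro a
    show (‖testSeq d J ν _‖₊ : ℝ≥0∞) ^ p = 1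
    rw [gval hp, if_pos]
    intro i
    refine ⟨by positivity, ?_, Dvd.intro _ rfl⟩
    have h1 : ((a i : ℕ) : ℤ) < (2^(J-ν) : ℕ) := by exact_mod_cast (a i).2
    calc 2^ν * ((a i : ℕ) : ℤ) < 2^ν * ((2^(J-ν) : ℕ) : ℤ) :=
        mul_lt_mul_of_pos_left h1 (by positivity)
      _ = 2^J := by push_cast; rw [hsplit]

-- C2 : upper bound, ν ≤ j, via cube position
lemma count_upper_cube {d J ν j : ℕ} {p : ℝ} (hp : 0 < p) (hν : ν ≤ j) (m : Fin d → ℤ) :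
    (∑' k : {k // inDyadic d j m k}, (‖testSeq d J ν k.1‖₊ : ℝ≥0∞) ^ p)
      ≤ (((2^(j-ν))^d : ℕ) : ℝ≥0∞) := by
  refine tsum_le_card (Q := inDyadic d j m) (g := fun k => (‖testSeq d J ν k‖₊ : ℝ≥0∞) ^ p)
    (fun k => by show (‖testSeq d J ν k‖₊ : ℝ≥0∞) ^ p ≤ 1; rw [gval hp]; split <;> simp)
    (fun k i => ⟨((k i - 2^j * m i)/2^ν).toNat % 2^(j-ν), Nat.mod_lt _ (by positivity)⟩) ?_
  intro a ha b hb hab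
  funext i
  have hta := testCond_of_ne hp ha.2 i
  have htb := testCond_of_ne hp hb.2 i
  have hfi : (((a i - 2^j * m i)/2^ν).toNat % 2^(j-ν)) = (((b i - 2^j * m i)/2^ν).toNat % 2^(j-ν)) := by
    have := congrFun hab i
    exact congrArg Fin.val this
  rw [coord hν (ha.1 i).1 (ha.1 i).2 hta.2.2, coord hν (hb.1 i).1 (hb.1 i).2 htb.2.2, hfi]

-- C3 : upper bound by total support size, any j,m
lemma count_upper_total {d J ν j : ℕ} {p : ℝ} (hp : 0 < p) (hν : ν ≤ J) (m : Fin d → ℤ) :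
    (∑' k : {k // inDyadic d j m k}, (‖testSeq d J ν k.1‖₊ : ℝ≥0∞) ^ p)
      ≤ (((2^(J-ν))^d : ℕ) : ℝ≥0∞) := by
  refine tsum_le_card (Q := inDyadic d j m) (g := fun k => (‖testSeq d J ν k‖₊ : ℝ≥0∞) ^ p)
    (fun k => by show (‖testSeq d J ν k‖₊ : ℝ≥0∞) ^ p ≤ 1; rw [gval hp]; split <;> simp)
    (fun k i => ⟨((k i)/2^ν).toNat % 2^(J-ν), Nat.mod_lt _ (by positivity)⟩) ?_
  intro a ha b hb hab
  funext i
  have hta := testCond_of_ne hp ha.2 i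
  have htb := testCond_of_ne hp hb.2 i
  have hfi : (((a i)/2^ν).toNat % 2^(J-ν)) = (((b i)/2^ν).toNat % 2^(J-ν)) :=
    congrArg Fin.val (congrFun hab i)
  have ha' := coord (c := 0) hν (by simpa using hta.1) (by simpa using hta.2.1) hta.2.2
  have hb' := coord (c := 0) hν (by simpa using htb.1) (by simpa using htb.2.1) htb.2.2
  simp only [mul_zero, zero_add, sub_zero] at ha' hb'
  rw [ha', hb', hfi]

-- C4 : upper bound 1 when j ≤ ν
lemma count_upper_one {d J ν j : ℕ} {p : ℝ} (hp : 0 < p) (hν : j ≤ ν) (m : Fin d → ℤ) :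
    (∑' k : {k // inDyadic d j m k}, (‖testSeq d J ν k.1‖₊ : ℝ≥0∞) ^ p)
      ≤ (((1^d : ℕ)) : ℝ≥0∞) := by
  refine tsum_le_card (Q := inDyadic d j m) (g := fun k => (‖testSeq d J ν k‖₊ : ℝ≥0∞) ^ p)
    (fun k => by show (‖testSeq d J ν k‖₊ : ℝ≥0∞) ^ p ≤ 1; rw [gval hp]; split <;> simp)
    (fun _ _ => (0 : Fin 1)) ?_
  intro a ha b hb _
  funext i
  have hta := testCond_of_ne hp ha.2 i
  have htb := testCond_of_ne hp hb.2 i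
  have hdvd : (2:ℤ)^ν ∣ a i - b i := dvd_sub hta.2.2 htb.2.2
  have h1 := ha.1 i
  have h2 := hb.1 i
  have hlt : |a i - b i| < 2^ν := by
    have hj : (2:ℤ)^j ≤ 2^ν := pow_le_pow_right₀ one_le_two hν
    rw [abs_lt]
    constructor <;> nlinarith [h1.1, h1.2, h2.1, h2.2]
  have : a i - b i = 0 := by
    by_contra hne
    have habs : (2:ℤ)^ν ≤ |a i - b i| := Int.le_of_dvd (abs_pos.2 (sub_ne_zero.2 ?_)) ((dvd_abs _ _).2 hdvd)
    · linarith
    · exact fun h => hne (by rw [h, sub_self])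
  linarith


lemma cast_pow_eq_rpow (a b : ℕ) : (((2^a)^b : ℕ) : ℝ≥0∞) = (2:ℝ≥0∞) ^ ((a:ℝ) * (b:ℝ)) := by
  have : ((a:ℝ) * (b:ℝ)) = ((a*b : ℕ) : ℝ) := by push_cast; ring
  rw [this, ENNReal.rpow_natCast, ← pow_mul]
  push_cast
  ring

lemma npow_eq_rpow (n : ℕ) : ((2:ℝ≥0∞) ^ n) = (2:ℝ≥0∞) ^ ((n : ℕ) : ℝ) := by
  rw [ENNReal.rpow_natCast]

lemma two_rpow_mul_two_rpow (a b : ℝ) : (2:ℝ≥0∞) ^ a * 2 ^ b = 2 ^ (a + b) :=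
  (ENNReal.rpow_add a b two_ne_zero ENNReal.ofNat_ne_top).symm

lemma two_rpow_mono {a b : ℝ} (h : a ≤ b) : (2:ℝ≥0∞) ^ a ≤ 2 ^ b :=
  ENNReal.rpow_le_rpow_of_exponent_le one_le_two h

lemma morrey_lower (d : ℕ) {u p : ℝ} (hu : 0 < u) (hp : 0 < p) {J ν : ℕ} (hν : ν ≤ J) :
    (2:ℝ≥0∞) ^ (((J:ℝ)*d)/u - ((ν:ℝ)*d)/p) ≤ morreyNorm d u p (testSeq d J ν) := by
  have key : (2:ℝ≥0∞) ^ (((J:ℝ)*d)/u - ((ν:ℝ)*d)/p) ≤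
      ((2 : ℝ≥0∞) ^ (J * d)) ^ (1 / u - 1 / p) *
        (∑' k : {k : Fin d → ℤ // inDyadic d J (fun _ => 0) k},
          (‖testSeq d J ν k.1‖₊ : ℝ≥0∞) ^ p) ^ (1 / p) := by
    have h1 : (((2^(J-ν))^d : ℕ) : ℝ≥0∞) ^ (1/p) ≤
        (∑' k : {k : Fin d → ℤ // inDyadic d J (fun _ => 0) k},
          (‖testSeq d J ν k.1‖₊ : ℝ≥0∞) ^ p) ^ (1/p) :=
      ENNReal.rpow_le_rpow (count_lower hp hν) (by positivity)
    calc (2:ℝ≥0∞) ^ (((J:ℝ)*d)/u - ((ν:ℝ)*d)/p)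
        = ((2 : ℝ≥0∞) ^ (J * d)) ^ (1 / u - 1 / p) * (((2^(J-ν))^d : ℕ) : ℝ≥0∞) ^ (1/p) := by
          rw [cast_pow_eq_rpow, npow_eq_rpow, ← ENNReal.rpow_mul, ← ENNReal.rpow_mul,
            two_rpow_mul_two_rpow]
          congr 1
          have hJν : (((J-ν : ℕ)) : ℝ) = (J:ℝ) - (ν:ℝ) := by
            push_cast [Nat.cast_sub hν]; ring
          push_cast [hJν]
          field_simp
          ring
      _ ≤ _ := mul_le_mul_right h1 _
  refine le_trans key ?_
  exact le_iSup₂ (f := fun j (m : Fin d → ℤ) =>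
    ((2 : ℝ≥0∞) ^ (j * d)) ^ (1 / u - 1 / p) *
      (∑' k : {k : Fin d → ℤ // inDyadic d j m k}, (‖testSeq d J ν k.1‖₊ : ℝ≥0∞) ^ p) ^ (1 / p))
    J (fun _ => 0)

lemma term_bound {d J ν j N : ℕ} {u p : ℝ} (hp : 0 < p) (m : Fin d → ℤ)
    (hsum : (∑' k : {k : Fin d → ℤ // inDyadic d j m k}, (‖testSeq d J ν k.1‖₊ : ℝ≥0∞) ^ p)
      ≤ (((2^N)^d : ℕ) : ℝ≥0∞)) :
    ((2 : ℝ≥0∞) ^ (j * d)) ^ (1 / u - 1 / p) *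
      (∑' k : {k : Fin d → ℤ // inDyadic d j m k}, (‖testSeq d J ν k.1‖₊ : ℝ≥0∞) ^ p) ^ (1 / p)
      ≤ (2:ℝ≥0∞) ^ (((j:ℝ)*d)*(1/u-1/p) + ((N:ℝ)*d)*(1/p)) := by
  have h1 : (∑' k : {k : Fin d → ℤ // inDyadic d j m k}, (‖testSeq d J ν k.1‖₊ : ℝ≥0∞) ^ p) ^ (1/p)
      ≤ (((2^N)^d : ℕ) : ℝ≥0∞) ^ (1/p) := ENNReal.rpow_le_rpow hsum (by positivity)
  calc _ ≤ ((2 : ℝ≥0∞) ^ (j * d)) ^ (1 / u - 1 / p) * (((2^N)^d : ℕ) : ℝ≥0∞) ^ (1/p) :=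
        mul_le_mul_right h1 _
    _ = (2:ℝ≥0∞) ^ (((j:ℝ)*d)*(1/u-1/p) + ((N:ℝ)*d)*(1/p)) := by
        rw [cast_pow_eq_rpow, npow_eq_rpow, ← ENNReal.rpow_mul, ← ENNReal.rpow_mul,
          two_rpow_mul_two_rpow]
        congr 1
        push_cast
        ring

lemma morrey_upper (d : ℕ) {u p : ℝ} (hp : 0 < p) (hpu : p ≤ u) {J ν : ℕ} (hν : ν ≤ J) :
    morreyNorm d u p (testSeq d J ν) ≤ max 1 ((2:ℝ≥0∞) ^ (((J:ℝ)*d)/u - ((ν:ℝ)*d)/p)) := by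
  have hu : 0 < u := lt_of_lt_of_le hp hpu
  have h1u : (0:ℝ) ≤ 1/u := by positivity
  have h1p : (0:ℝ) ≤ 1/p := by positivity
  have hinv : 1/u ≤ 1/p := one_div_le_one_div_of_le hp hpu
  have hd0 : (0:ℝ) ≤ (d:ℝ) := Nat.cast_nonneg d
  refine iSup₂_le fun j m => ?_
  have hj0 : (0:ℝ) ≤ (j:ℝ) := Nat.cast_nonneg j
  rcases le_or_gt j ν with hjν | hjν
  · have hsum' : (∑' k : {k : Fin d → ℤ // inDyadic d j m k}, (‖testSeq d J ν k.1‖₊ : ℝ≥0∞) ^ p)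
        ≤ (((2^0)^d : ℕ) : ℝ≥0∞) := by simpa using count_upper_one (J := J) hp hjν m
    refine le_trans (term_bound hp m hsum') (le_trans ?_ (le_max_left _ _))
    have he : ((j:ℝ)*d)*(1/u-1/p) + (((0:ℕ)):ℝ)*d*(1/p) ≤ 0 := by
      push_cast
      nlinarith [mul_nonneg (mul_nonneg hj0 hd0) (sub_nonneg.2 hinv)]
    calc (2:ℝ≥0∞) ^ (((j:ℝ)*d)*(1/u-1/p) + (((0:ℕ)):ℝ)*d*(1/p)) ≤ 2 ^ (0:ℝ) := two_rpow_mono he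
      _ = 1 := by simp
  · rcases le_or_gt j J with hjJ | hjJ
    · have hsum := count_upper_cube (J := J) hp hjν.le m
      refine le_trans (term_bound hp m hsum) (le_trans (two_rpow_mono ?_) (le_max_right _ _))
      have hc : (((j-ν : ℕ)):ℝ) = (j:ℝ) - ν := by push_cast [Nat.cast_sub hjν.le]; ring
      rw [hc]
      have hjJ' : (j:ℝ) ≤ J := by exact_mod_cast hjJ
      have h1 : (0:ℝ) ≤ ((J:ℝ) - j)*d*u⁻¹ :=
        mul_nonneg (mul_nonneg (sub_nonneg.2 hjJ') hd0) (inv_nonneg.2 hu.le)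
      ring_nf
      nlinarith [h1]
    · have hsum := count_upper_total (j := j) hp hν m
      refine le_trans (term_bound hp m hsum) (le_trans (two_rpow_mono ?_) (le_max_right _ _))
      have hc : (((J-ν : ℕ)):ℝ) = (J:ℝ) - ν := by push_cast [Nat.cast_sub hν]; ring
      rw [hc]
      have hjJ' : (J:ℝ) ≤ j := by exact_mod_cast hjJ.le
      have hinv' : u⁻¹ ≤ p⁻¹ := by simpa [one_div] using hinv
      have h1 : (0:ℝ) ≤ ((j:ℝ) - J)*d*(p⁻¹ - u⁻¹) :=
        mul_nonneg (mul_nonneg (sub_nonneg.2 hjJ') hd0) (sub_nonneg.2 hinv')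
      ring_nf
      nlinarith [h1]

lemma two_rpow_ne_top (x : ℝ) : (2:ℝ≥0∞) ^ x ≠ ⊤ := by
  rw [show (2:ℝ≥0∞) = ((2:ℝ≥0):ℝ≥0∞) from rfl, ← ENNReal.coe_rpow_of_ne_zero two_ne_zero]
  exact ENNReal.coe_ne_top

lemma one_le_two_rpow {x : ℝ} (hx : 0 ≤ x) : (1:ℝ≥0∞) ≤ 2 ^ x := by
  simpa using two_rpow_mono hx

lemma unbounded_contra {K : ℝ≥0∞} (hK : K ≠ ⊤) {c : ℝ} (hc : 0 < c)
    (h : ∀ n : ℕ, (2:ℝ≥0∞) ^ (c * n) ≤ K) : False := by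
  obtain ⟨M, hM⟩ := ENNReal.exists_nat_gt hK
  set N := ⌈(M:ℝ)/c⌉₊ with hN
  have hNle : (M:ℝ) ≤ c * N := by
    have h1 := Nat.le_ceil ((M:ℝ)/c)
    calc (M:ℝ) = c * ((M:ℝ)/c) := by field_simp
      _ ≤ c * N := mul_le_mul_of_nonneg_left h1 hc.le
  have h1 : (M:ℝ≥0∞) ≤ 2 ^ ((M:ℕ):ℝ) := by
    rw [ENNReal.rpow_natCast]
    have : (M:ℕ) ≤ 2 ^ M := (Nat.lt_two_pow_self (n := M)).le
    exact_mod_cast this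
  exact absurd (le_trans h1 (le_trans (two_rpow_mono hNle) (h N))) (not_le.2 hM)

lemma oneSide {d : ℕ} (hd : 0 < d) {u₁ p₁ u₂ p₂ : ℝ}
    (hp₁ : 0 < p₁) (hpu₁ : p₁ ≤ u₁) (hp₂ : 0 < p₂) (hpu₂ : p₂ ≤ u₂)
    (C : ℝ≥0) (hC : ∀ lam : (Fin d → ℤ) → ℂ, morreyNorm d u₁ p₁ lam ≠ ⊤ →
        morreyNorm d u₂ p₂ lam ≤ (C : ℝ≥0∞) * morreyNorm d u₁ p₁ lam) :
    u₁ ≤ u₂ ∧ p₂ * u₁ ≤ p₁ * u₂ := by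
  have hu₁ : 0 < u₁ := lt_of_lt_of_le hp₁ hpu₁
  have hu₂ : 0 < u₂ := lt_of_lt_of_le hp₂ hpu₂
  have hd0 : (0:ℝ) < (d:ℝ) := by exact_mod_cast hd
  have KEY : ∀ J ν : ℕ, ν ≤ J →
      (2:ℝ≥0∞) ^ (((J:ℝ)*d)/u₂ - ((ν:ℝ)*d)/p₂) ≤
        C * max 1 ((2:ℝ≥0∞) ^ (((J:ℝ)*d)/u₁ - ((ν:ℝ)*d)/p₁)) := by
    intro J ν hν
    have hfin : morreyNorm d u₁ p₁ (testSeq d J ν) ≠ ⊤ := by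
      refine ne_top_of_le_ne_top ?_ (morrey_upper d hp₁ hpu₁ hν)
      exact (max_lt (by simp) (two_rpow_ne_top _).lt_top).ne
    exact le_trans (morrey_lower d hu₂ hp₂ hν)
      (le_trans (hC _ hfin) (mul_le_mul_right (morrey_upper d hp₁ hpu₁ hν) C))
  constructor
  · by_contra hcon
    push_neg at hcon
    have hoinv : 1/u₁ < 1/u₂ := one_div_lt_one_div_of_lt hu₂ hcon
    set c : ℝ := d * (1/u₂ - 1/u₁) with hc
    have hcpos : 0 < c := mul_pos hd0 (sub_pos.2 hoinv)
    refine unbounded_contra (K := (C:ℝ≥0∞)) ENNReal.coe_ne_top hcpos fun n => ?_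
    have hk := KEY n 0 (Nat.zero_le n)
    simp only [Nat.cast_zero, zero_mul, zero_div, sub_zero] at hk
    rw [max_eq_right (one_le_two_rpow (by positivity))] at hk
    have h2 := mul_le_mul_left hk ((2:ℝ≥0∞) ^ (-(((n:ℝ)*d)/u₁)))
    rw [two_rpow_mul_two_rpow, mul_assoc, two_rpow_mul_two_rpow, add_neg_cancel,
      ENNReal.rpow_zero, mul_one] at h2
    calc (2:ℝ≥0∞) ^ (c * n) = 2 ^ ((((n:ℝ)*d)/u₂) + (-(((n:ℝ)*d)/u₁))) := by
          congr 1; rw [hc]; ring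
      _ ≤ C := h2
  · by_contra hcon
    push_neg at hcon
    set c : ℝ := d * (u₁/(p₁*u₂) - 1/p₂) with hc
    have hcpos : 0 < c := by
      refine mul_pos hd0 (sub_pos.2 ?_)
      rw [div_lt_div_iff₀ hp₂ (by positivity)]
      nlinarith
    refine unbounded_contra (K := (C : ℝ≥0∞) * 2 ^ ((d:ℝ)/u₁))
      (ENNReal.mul_ne_top ENNReal.coe_ne_top (two_rpow_ne_top _)) hcpos fun n => ?_
    set J : ℕ := ⌈(n:ℝ)*u₁/p₁⌉₊ with hJ
    have hJ1 : (n:ℝ)*u₁/p₁ ≤ J := Nat.le_ceil _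
    have hJ2 : (J:ℝ) ≤ (n:ℝ)*u₁/p₁ + 1 := (Nat.ceil_lt_add_one (by positivity)).le
    have hνJ : n ≤ J := by
      have h1 : (n:ℝ) ≤ (n:ℝ)*u₁/p₁ := by
        rw [mul_div_assoc]
        nth_rewrite 1 [← mul_one (n:ℝ)]
        exact mul_le_mul_of_nonneg_left ((one_le_div hp₁).2 hpu₁) (Nat.cast_nonneg n)
      exact_mod_cast le_trans h1 hJ1
    have hk := KEY J n hνJ
    have hmax : max 1 ((2:ℝ≥0∞) ^ (((J:ℝ)*d)/u₁ - ((n:ℝ)*d)/p₁)) ≤ 2 ^ ((d:ℝ)/u₁) := by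
      refine max_le (one_le_two_rpow (by positivity)) (two_rpow_mono ?_)
      have hh := mul_le_mul_of_nonneg_right hJ2 (le_of_lt (by positivity : (0:ℝ) < d/u₁))
      have hcc : u₁ * u₁⁻¹ = 1 := mul_inv_cancel₀ (ne_of_gt hu₁)
      rw [div_add' _ _ _ (ne_of_gt hp₁)] at hh
      field_simp at hh ⊢
      nlinarith [hh]
    have hexp : c * n ≤ ((J:ℝ)*d)/u₂ - ((n:ℝ)*d)/p₂ := by
      have hh := mul_le_mul_of_nonneg_right hJ1 (le_of_lt (by positivity : (0:ℝ) < d/u₂))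
      rw [hc]
      field_simp at hh ⊢
      nlinarith [hh, mul_le_mul_of_nonneg_right hh hp₂.le]
    calc (2:ℝ≥0∞) ^ (c * n) ≤ 2 ^ (((J:ℝ)*d)/u₂ - ((n:ℝ)*d)/p₂) := two_rpow_mono hexp
      _ ≤ C * max 1 ((2:ℝ≥0∞) ^ (((J:ℝ)*d)/u₁ - ((n:ℝ)*d)/p₁)) := hk
      _ ≤ C * 2 ^ ((d:ℝ)/u₁) := mul_le_mul_right hmax C

end MorreyAux

theorem morrey_equal_iff (d : ℕ) (hd : 0 < d) (u₁ p₁ u₂ p₂ : ℝ)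
    (hp₁ : 0 < p₁) (hpu₁ : p₁ ≤ u₁) (hp₂ : 0 < p₂) (hpu₂ : p₂ ≤ u₂) :
    ((∃ C : ℝ≥0, 0 < C ∧ ∀ lam : (Fin d → ℤ) → ℂ, morreyNorm d u₁ p₁ lam ≠ ⊤ →
        morreyNorm d u₂ p₂ lam ≤ (C : ℝ≥0∞) * morreyNorm d u₁ p₁ lam) ∧
     (∃ C : ℝ≥0, 0 < C ∧ ∀ lam : (Fin d → ℤ) → ℂ, morreyNorm d u₂ p₂ lam ≠ ⊤ →
        morreyNorm d u₁ p₁ lam ≤ (C : ℝ≥0∞) * morreyNorm d u₂ p₂ lam)) ↔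
      (u₁ = u₂ ∧ p₁ = p₂) := by
  constructor
  · rintro ⟨⟨C₁, -, hC₁⟩, ⟨C₂, -, hC₂⟩⟩
    obtain ⟨h12u, h12p⟩ := oneSide hd hp₁ hpu₁ hp₂ hpu₂ C₁ hC₁
    obtain ⟨h21u, h21p⟩ := oneSide hd hp₂ hpu₂ hp₁ hpu₁ C₂ hC₂
    have hu : u₁ = u₂ := le_antisymm h12u h21u
    refine ⟨hu, ?_⟩
    have hu₂ : 0 < u₂ := lt_of_lt_of_le hp₂ hpu₂
    rw [hu] at h12p h21p
    have hpq : p₂ * u₂ = p₁ * u₂ := le_antisymm h12p h21p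
    exact (mul_right_cancel₀ (ne_of_gt hu₂) hpq).symm
  · rintro ⟨rfl, rfl⟩
    exact ⟨⟨1, one_pos, fun lam _ => by simp⟩, ⟨1, one_pos, fun lam _ => by simp⟩⟩
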